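/- (Grönwall-type lemma with weakly singular kernel.) Fix 0 ≤ s < T and constants C₀ ≥ 0 and c ≥ 0. Suppose A : [s,T] → [0,∞) is measurable, integrable on [s,T], and satisfies A(t) ≤ C₀·(t−s)^{−1/2} + c·∫ₛᵗ A(θ)·(t−θ)^{−1/4} dθ for all t ∈ (s,T]. Then there exists a constant C > 0, depending only on T, C₀ and c, such that A(t) ≤ C·(t−s)^{−1/2} for all t ∈ (s,T]. -/

import Mathlib

open Real MeasureTheory Set
open scoped ENNReal

lemma rpow_shift_ii (a b p : ℝ) (hp : -1 < p) :
    IntervalIntegrable (fun θ => (θ - a) ^ p) volume a b := by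
  have h := (intervalIntegral.intervalIntegrable_rpow' (a := a - a) (b := b - a) hp).comp_sub_right a
  simpa using h

lemma rpow_shift_eval (a m p : ℝ) (hp : -1 < p) :
    ∫ θ in a..m, (θ - a) ^ p = (m - a) ^ (p + 1) / (p + 1) := by
  rw [show (fun θ => (θ - a) ^ p) = (fun x => x ^ p) ∘ (fun θ => θ - a) from rfl]
  rw [show (∫ θ in a..m, ((fun x => x ^ p) ∘ (fun θ => θ - a)) θ) =
      ∫ θ in a..m, (θ - a) ^ p from rfl]
  rw [intervalIntegral.integral_comp_sub_right (fun x => x ^ p) a]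
  rw [integral_rpow (Or.inl hp)]
  rw [sub_self, Real.zero_rpow (by linarith)]
  ring

lemma rpow_shift_setIntegral (a m p : ℝ) (hp : -1 < p) (ham : a ≤ m) :
    ∫ θ in Ioc a m, (θ - a) ^ p = (m - a) ^ (p + 1) / (p + 1) := by
  rw [← intervalIntegral.integral_of_le ham, rpow_shift_eval a m p hp]

lemma rpow_shift_setIntegral' (b m q : ℝ) (hq : -1 < q) (hmb : m ≤ b) :
    ∫ θ in Ioc m b, (b - θ) ^ q = (b - m) ^ (q + 1) / (q + 1) := by
  rw [← intervalIntegral.integral_of_le hmb]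
  rw [intervalIntegral.integral_comp_sub_left (fun x => x ^ q) b]
  rw [sub_self, integral_rpow (Or.inl hq), Real.zero_rpow (by linarith)]
  ring

lemma half_lint_le (a m p K : ℝ) (hp : -1 < p) (ham : a ≤ m) (hK : 0 ≤ K) :
    ∫⁻ θ in Ioc a m, ENNReal.ofReal ((θ - a) ^ p * K) ≤
      ENNReal.ofReal ((m - a) ^ (p + 1) / (p + 1) * K) := by
  have hint : IntegrableOn (fun θ => (θ - a) ^ p * K) (Ioc a m) volume := by
    exact ((intervalIntegrable_iff_integrableOn_Ioc_of_le ham).mp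
      (rpow_shift_ii a m p hp)).mul_const K
  have hnn : 0 ≤ᵐ[volume.restrict (Ioc a m)] (fun θ => (θ - a) ^ p * K) := by
    filter_upwards [ae_restrict_mem measurableSet_Ioc] with θ hθ
    exact mul_nonneg (Real.rpow_nonneg (by simp at hθ; linarith [hθ.1]) p) hK
  rw [← MeasureTheory.ofReal_integral_eq_lintegral_ofReal hint hnn]
  rw [MeasureTheory.integral_mul_const, rpow_shift_setIntegral a m p hp ham]

lemma half_lint_le' (m b q K : ℝ) (hq : -1 < q) (hmb : m ≤ b) (hK : 0 ≤ K) :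
    ∫⁻ θ in Ioc m b, ENNReal.ofReal (K * (b - θ) ^ q) ≤
      ENNReal.ofReal (K * ((b - m) ^ (q + 1) / (q + 1))) := by
  have hii : IntervalIntegrable (fun θ => (b - θ) ^ q) volume m b := by
    have h := (intervalIntegral.intervalIntegrable_rpow' (a := b - b) (b := b - m) hq).comp_sub_left b
    simpa using h.symm
  have hint : IntegrableOn (fun θ => K * (b - θ) ^ q) (Ioc m b) volume := by
    exact (((intervalIntegrable_iff_integrableOn_Ioc_of_le hmb).mp hii)).const_mul K
  have hnn : 0 ≤ᵐ[volume.restrict (Ioc m b)] (fun θ => K * (b - θ) ^ q) := by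
    filter_upwards [ae_restrict_mem measurableSet_Ioc] with θ hθ
    exact mul_nonneg hK (Real.rpow_nonneg (by simp at hθ; linarith [hθ.2]) q)
  rw [← MeasureTheory.ofReal_integral_eq_lintegral_ofReal hint hnn]
  rw [MeasureTheory.integral_const_mul, rpow_shift_setIntegral' b m q hq hmb]

lemma kernel_lintegral_le (a b p q : ℝ) (hab : a < b) (hp : -1 < p) (hp0 : p ≤ 0)
    (hq : -1 < q) (hq0 : q ≤ 0) (hpq : 0 ≤ p + q + 1) :
    ∫⁻ θ in Ioc a b, ENNReal.ofReal ((θ - a) ^ p * (b - θ) ^ q) ≤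
      ENNReal.ofReal ((1 / (p + 1) + 1 / (q + 1)) * (b - a) ^ (p + q + 1)) := by
  set m := (a + b) / 2 with hm
  have ham : a ≤ m := by simp only [hm]; linarith
  have hmb : m ≤ b := by simp only [hm]; linarith
  have hsplit : Ioc a b = Ioc a m ∪ Ioc m b := (Set.Ioc_union_Ioc_eq_Ioc ham hmb).symm
  have hd : Disjoint (Ioc a m) (Ioc m b) := Set.Ioc_disjoint_Ioc_of_le le_rfl
  rw [hsplit, lintegral_union measurableSet_Ioc hd]
  have hhalf : b - m = (b - a) / 2 := by simp only [hm]; ring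
  have hhalf' : m - a = (b - a) / 2 := by simp only [hm]; ring
  have hba2 : (0:ℝ) < (b - a) / 2 := by linarith
  -- first half
  have h1 : ∫⁻ θ in Ioc a m, ENNReal.ofReal ((θ - a) ^ p * (b - θ) ^ q) ≤
      ENNReal.ofReal (((b - a) / 2) ^ (p + 1) / (p + 1) * ((b - a) / 2) ^ q) := by
    refine le_trans (setLIntegral_mono'
      (g := fun θ => ENNReal.ofReal ((θ - a) ^ p * ((b - a) / 2) ^ q))
      measurableSet_Ioc ?_) ?_
    · intro θ hθ
      refine ENNReal.ofReal_le_ofReal ?_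
      have h1 : 0 < θ - a := by simp at hθ; linarith [hθ.1]
      have h2 : (b - a) / 2 ≤ b - θ := by simp at hθ; linarith [hθ.2]
      exact mul_le_mul_of_nonneg_left
        (Real.rpow_le_rpow_of_nonpos hba2 h2 hq0) (Real.rpow_nonneg h1.le p)
    · have := half_lint_le a m p (((b - a) / 2) ^ q) hp ham (Real.rpow_nonneg hba2.le q)
      rwa [hhalf'] at this
  -- second half
  have h2 : ∫⁻ θ in Ioc m b, ENNReal.ofReal ((θ - a) ^ p * (b - θ) ^ q) ≤
      ENNReal.ofReal (((b - a) / 2) ^ p * (((b - a) / 2) ^ (q + 1) / (q + 1))) := by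
    refine le_trans (setLIntegral_mono'
      (g := fun θ => ENNReal.ofReal (((b - a) / 2) ^ p * (b - θ) ^ q))
      measurableSet_Ioc ?_) ?_
    · intro θ hθ
      refine ENNReal.ofReal_le_ofReal ?_
      have h1 : 0 ≤ b - θ := by simp at hθ; linarith [hθ.2]
      have h2 : (b - a) / 2 ≤ θ - a := by simp at hθ; linarith [hθ.1]
      exact mul_le_mul_of_nonneg_right
        (Real.rpow_le_rpow_of_nonpos hba2 h2 hp0) (Real.rpow_nonneg h1 q)
    · have := half_lint_le' m b q (((b - a) / 2) ^ p) hq hmb (Real.rpow_nonneg hba2.le p)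
      rwa [hhalf] at this
  have hp1 : (0:ℝ) < p + 1 := by linarith
  have hq1 : (0:ℝ) < q + 1 := by linarith
  have hcoef : (0:ℝ) ≤ 1 / (p + 1) + 1 / (q + 1) :=
    add_nonneg (le_of_lt (div_pos one_pos hp1)) (le_of_lt (div_pos one_pos hq1))
  refine le_trans (add_le_add h1 h2) ?_
  rw [← ENNReal.ofReal_add
    (mul_nonneg (div_nonneg (Real.rpow_nonneg hba2.le _) hp1.le) (Real.rpow_nonneg hba2.le _))
    (mul_nonneg (Real.rpow_nonneg hba2.le _) (div_nonneg (Real.rpow_nonneg hba2.le _) hq1.le))]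
  refine ENNReal.ofReal_le_ofReal ?_
  set X := (b - a) / 2 with hX
  have hXne : X ≠ 0 := ne_of_gt hba2
  have hXp1 : X ^ (p + 1) = X ^ p * X := by rw [Real.rpow_add_one hXne]
  have hXq1 : X ^ (q + 1) = X ^ q * X := by rw [Real.rpow_add_one hXne]
  have hXpq : X ^ (p + q + 1) = X ^ p * (X ^ q * X) := by
    rw [show p + q + 1 = p + (q + 1) by ring, Real.rpow_add hba2, Real.rpow_add_one hXne]
  calc X ^ (p + 1) / (p + 1) * X ^ q + X ^ p * (X ^ (q + 1) / (q + 1))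
      = (1 / (p + 1) + 1 / (q + 1)) * X ^ (p + q + 1) := by
        rw [hXp1, hXq1, hXpq]; field_simp
    _ ≤ (1 / (p + 1) + 1 / (q + 1)) * (b - a) ^ (p + q + 1) :=
        mul_le_mul_of_nonneg_left
          (Real.rpow_le_rpow hba2.le (by rw [hX]; linarith) hpq) hcoef

set_option maxHeartbeats 1000000 in
theorem gronwall_weakly_singular_kernel (T C₀ c : ℝ) (hT : 0 < T)
    (hC₀ : 0 ≤ C₀) (hc : 0 ≤ c) :
    ∃ C : ℝ, 0 < C ∧ ∀ s : ℝ, 0 ≤ s → s < T → ∀ A : ℝ → ℝ,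
      Measurable A →
      (∀ t ∈ Set.Icc s T, 0 ≤ A t) →
      IntegrableOn A (Set.Icc s T) →
      (∀ t : ℝ, s < t → t ≤ T →
        A t ≤ C₀ * (t - s) ^ (-(1/2) : ℝ) +
          c * ∫ θ in s..t, A θ * (t - θ) ^ (-(1/4) : ℝ)) →
      ∀ t : ℝ, s < t → t ≤ T → A t ≤ C * (t - s) ^ (-(1/2) : ℝ) := by
  have hT4 : (0:ℝ) ≤ T ^ ((1:ℝ)/4) := Real.rpow_nonneg hT.le _
  have hT2 : (0:ℝ) ≤ T ^ ((1:ℝ)/2) := Real.rpow_nonneg hT.le _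
  set M1 : ℝ := c * C₀ * (10/3) * T ^ ((1:ℝ)/4) with hM1def
  set L : ℝ := c^2 * (8/3) * T ^ ((1:ℝ)/2) with hLdef
  have hM1 : 0 ≤ M1 := by positivity
  have hL : 0 ≤ L := by positivity
  set G0 : ℝ := 2 * C₀ * T ^ ((1:ℝ)/2) + M1 * T with hG0def
  have hG0 : 0 ≤ G0 := by positivity
  set B : ℝ := G0 * Real.exp (L * T) with hBdef
  have hB : 0 ≤ B := by positivity
  refine ⟨C₀ + (M1 + L * B) * T ^ ((1:ℝ)/2) + 1, by positivity, ?_⟩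
  intro s hs hsT A hA hA0 hAint hAineq
  set f : ℝ → ℝ≥0∞ := fun θ => ENNReal.ofReal (A θ) with hfdef
  have hfmeas : Measurable f := ENNReal.measurable_ofReal.comp hA
  set F : ℝ → ℝ := fun u => ∫ σ in Ioc s u, A σ with hFdef
  have hF0 : ∀ u, u ≤ T → 0 ≤ F u := by
    intro u hu
    refine setIntegral_nonneg measurableSet_Ioc fun σ hσ => ?_
    exact hA0 σ ⟨hσ.1.le, hσ.2.trans hu⟩
  -- Step 1 : ENNReal form of the hypothesis
  have h1 : ∀ t, s < t → t ≤ T →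
      f t ≤ ENNReal.ofReal (C₀ * (t - s) ^ (-(1/2) : ℝ)) +
        ENNReal.ofReal c *
          ∫⁻ θ in Ioc s t, f θ * ENNReal.ofReal ((t - θ) ^ (-(1/4) : ℝ)) := by
    intro t hst htT
    have hnn : 0 ≤ᵐ[volume.restrict (Ioc s t)]
        (fun θ => A θ * (t - θ) ^ (-(1/4) : ℝ)) := by
      filter_upwards [ae_restrict_mem measurableSet_Ioc] with θ hθ
      exact mul_nonneg (hA0 θ ⟨hθ.1.le, hθ.2.trans htT⟩)
        (Real.rpow_nonneg (by linarith [hθ.2]) _)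
    have hmeasK : Measurable fun θ => A θ * (t - θ) ^ (-(1/4) : ℝ) :=
      hA.mul (by fun_prop)
    have hint_eq : ∫ θ in s..t, A θ * (t - θ) ^ (-(1/4) : ℝ)
        = (∫⁻ θ in Ioc s t,
            ENNReal.ofReal (A θ * (t - θ) ^ (-(1/4) : ℝ))).toReal := by
      rw [intervalIntegral.integral_of_le hst.le]
      exact integral_eq_lintegral_of_nonneg_ae hnn
        hmeasK.aestronglyMeasurable.restrict
    have hlin_eq : (∫⁻ θ in Ioc s t,
          ENNReal.ofReal (A θ * (t - θ) ^ (-(1/4) : ℝ)))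
        = ∫⁻ θ in Ioc s t, f θ * ENNReal.ofReal ((t - θ) ^ (-(1/4) : ℝ)) := by
      refine setLIntegral_congr_fun measurableSet_Ioc (fun θ hθ => ?_)
      exact ENNReal.ofReal_mul (hA0 θ ⟨hθ.1.le, hθ.2.trans htT⟩)
    calc f t ≤ ENNReal.ofReal (C₀ * (t - s) ^ (-(1/2) : ℝ) +
          c * ∫ θ in s..t, A θ * (t - θ) ^ (-(1/4) : ℝ)) :=
        ENNReal.ofReal_le_ofReal (hAineq t hst htT)
      _ ≤ ENNReal.ofReal (C₀ * (t - s) ^ (-(1/2) : ℝ)) +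
          ENNReal.ofReal (c * ∫ θ in s..t, A θ * (t - θ) ^ (-(1/4) : ℝ)) :=
        ENNReal.ofReal_add_le
      _ ≤ _ := by
          rw [ENNReal.ofReal_mul hc, hint_eq]
          refine add_le_add_right (mul_le_mul_right ?_ _) _
          rw [← hlin_eq]
          exact ENNReal.ofReal_toReal_le
  -- Step 2 : key pointwise estimate
  have hkey : ∀ t, s < t → t ≤ T →
      A t ≤ C₀ * (t - s) ^ (-(1/2) : ℝ) + M1 + L * F t := by
    intro t hst htT
    have hts : (0:ℝ) < t - s := by linarith
    set k : ℝ → ℝ≥0∞ := fun θ => ENNReal.ofReal ((t - θ) ^ (-(1/4) : ℝ)) with hkdef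
    have hkmeas : Measurable k := by fun_prop
    set inr : ℝ → ℝ≥0∞ := fun θ =>
      ∫⁻ σ in Ioc s θ, f σ * ENNReal.ofReal ((θ - σ) ^ (-(1/4) : ℝ)) with hinrdef
    set Kf : ℝ × ℝ → ℝ≥0∞ := fun p => f p.2 *
      ENNReal.ofReal ((p.1 - p.2) ^ (-(1/4) : ℝ)) *
      ENNReal.ofReal ((t - p.1) ^ (-(1/4) : ℝ)) with hKfdef
    have hKfmeas : Measurable Kf :=
      ((hfmeas.comp measurable_snd).mul (by fun_prop)).mul (by fun_prop)
    set Hh : ℝ × ℝ → ℝ≥0∞ :=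
      fun p => Set.indicator {q : ℝ × ℝ | q.2 ≤ q.1} Kf p with hHhdef
    have hHmeas : Measurable Hh :=
      hKfmeas.indicator (measurableSet_le measurable_snd measurable_fst)
    set D : ℝ≥0∞ := ∫⁻ θ in Ioc s t, ∫⁻ σ in Ioc s θ, Kf (θ, σ) with hDdef
    -- reduce inner set integrals to fixed-rectangle integrals via indicators
    have ha : ∀ θ ∈ Ioc s t,
        (∫⁻ σ in Ioc s θ, Kf (θ, σ)) = ∫⁻ σ in Ioc s t, Hh (θ, σ) := by
      intro θ hθ
      have e1 : ∀ σ, Hh (θ, σ) = (Iic θ).indicator (fun σ => Kf (θ, σ)) σ := by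
        intro σ
        simp only [hHhdef, Set.indicator_apply, Set.mem_setOf_eq, Set.mem_Iic]
      simp_rw [e1]
      rw [lintegral_indicator measurableSet_Iic,
        Measure.restrict_restrict measurableSet_Iic]
      congr 1
      rw [show Iic θ ∩ Ioc s t = Ioc s θ from ?_]
      ext x
      simp only [Set.mem_inter_iff, Set.mem_Iic, Set.mem_Ioc]
      exact ⟨fun h => ⟨h.2.1, h.1⟩, fun h => ⟨h.2, h.1, h.2.trans hθ.2⟩⟩
    have hswap : (∫⁻ θ in Ioc s t, ∫⁻ σ in Ioc s t, Hh (θ, σ))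
        = ∫⁻ σ in Ioc s t, ∫⁻ θ in Ioc s t, Hh (θ, σ) := by
      exact lintegral_lintegral_swap hHmeas.aemeasurable
    have hc1 : ∀ σ ∈ Ioc s t,
        (∫⁻ θ in Ioc s t, Hh (θ, σ)) ≤
          f σ * ENNReal.ofReal ((8/3) * T ^ ((1:ℝ)/2)) := by
      intro σ hσ
      have e2 : ∀ θ, Hh (θ, σ) = (Ici σ).indicator (fun θ => Kf (θ, σ)) θ := by
        intro θ
        simp only [hHhdef, Set.indicator_apply, Set.mem_setOf_eq, Set.mem_Ici]
      simp_rw [e2]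
      rw [lintegral_indicator measurableSet_Ici,
        Measure.restrict_restrict measurableSet_Ici]
      have hset : Ici σ ∩ Ioc s t = Icc σ t := by
        ext x
        simp only [Set.mem_inter_iff, Set.mem_Ici, Set.mem_Ioc, Set.mem_Icc]
        exact ⟨fun h => ⟨h.1, h.2.2⟩, fun h => ⟨h.1, lt_of_lt_of_le hσ.1 h.1, h.2⟩⟩
      rw [hset, ← MeasureTheory.restrict_Ioc_eq_restrict_Icc]
      have e3 : ∀ θ, Kf (θ, σ) = f σ *
          (ENNReal.ofReal ((θ - σ) ^ (-(1/4) : ℝ)) *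
           ENNReal.ofReal ((t - θ) ^ (-(1/4) : ℝ))) := by
        intro θ; simp only [hKfdef]; ring
      simp_rw [e3]
      rw [lintegral_const_mul' _ _ ENNReal.ofReal_ne_top]
      refine mul_le_mul_right ?_ _
      rcases eq_or_lt_of_le hσ.2 with h | hσt
      · rw [h]; simp
      have hmerge : (∫⁻ θ in Ioc σ t,
            ENNReal.ofReal ((θ - σ) ^ (-(1/4) : ℝ)) *
            ENNReal.ofReal ((t - θ) ^ (-(1/4) : ℝ)))
          = ∫⁻ θ in Ioc σ t, ENNReal.ofReal
              ((θ - σ) ^ (-(1/4) : ℝ) * (t - θ) ^ (-(1/4) : ℝ)) := by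
        refine setLIntegral_congr_fun measurableSet_Ioc (fun θ hθ => ?_)
        exact (ENNReal.ofReal_mul (Real.rpow_nonneg (by linarith [hθ.1]) _)).symm
      rw [hmerge]
      refine le_trans (kernel_lintegral_le σ t (-(1/4)) (-(1/4)) hσt
        (by norm_num) (by norm_num) (by norm_num) (by norm_num) (by norm_num)) ?_
      refine ENNReal.ofReal_le_ofReal ?_
      rw [show (-(1/4) + -(1/4) + 1 : ℝ) = (1:ℝ)/2 by norm_num]
      rw [show (1 / (-(1/4) + 1) + 1 / (-(1/4) + 1) : ℝ) = 8/3 by norm_num]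
      refine mul_le_mul_of_nonneg_left ?_ (by norm_num)
      refine Real.rpow_le_rpow (by linarith [hσ.2]) (by linarith [hσ.1, hs]) (by norm_num)
    have hFf : (∫⁻ σ in Ioc s t, f σ) = ENNReal.ofReal (F t) := by
      refine (ofReal_integral_eq_lintegral_ofReal
        (hAint.mono_set fun x hx => ⟨hx.1.le, hx.2.trans htT⟩) ?_).symm
      filter_upwards [ae_restrict_mem measurableSet_Ioc] with θ hθ
      exact hA0 θ ⟨hθ.1.le, hθ.2.trans htT⟩
    have hD : D ≤ ENNReal.ofReal ((8/3) * T ^ ((1:ℝ)/2) * F t) := by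
      have hDe : D = ∫⁻ σ in Ioc s t, ∫⁻ θ in Ioc s t, Hh (θ, σ) := by
        rw [← hswap]
        exact setLIntegral_congr_fun measurableSet_Ioc ha
      rw [hDe]
      refine le_trans (setLIntegral_mono' measurableSet_Ioc hc1) ?_
      rw [lintegral_mul_const' _ _ ENNReal.ofReal_ne_top, hFf]
      rw [← ENNReal.ofReal_mul (hF0 t htT), mul_comm (F t)]
    -- first iterated bound
    have hI1 : (∫⁻ θ in Ioc s t,
        ENNReal.ofReal ((θ - s) ^ (-(1/2) : ℝ)) * k θ)
        ≤ ENNReal.ofReal ((10/3) * T ^ ((1:ℝ)/4)) := by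
      have hmerge : (∫⁻ θ in Ioc s t,
            ENNReal.ofReal ((θ - s) ^ (-(1/2) : ℝ)) * k θ)
          = ∫⁻ θ in Ioc s t, ENNReal.ofReal
              ((θ - s) ^ (-(1/2) : ℝ) * (t - θ) ^ (-(1/4) : ℝ)) := by
        refine setLIntegral_congr_fun measurableSet_Ioc (fun θ hθ => ?_)
        exact (ENNReal.ofReal_mul (Real.rpow_nonneg (by linarith [hθ.1]) _)).symm
      rw [hmerge]
      refine le_trans (kernel_lintegral_le s t (-(1/2)) (-(1/4)) (by linarith)
        (by norm_num) (by norm_num) (by norm_num) (by norm_num) (by norm_num)) ?_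
      refine ENNReal.ofReal_le_ofReal ?_
      rw [show (-(1/2) + -(1/4) + 1 : ℝ) = (1:ℝ)/4 by norm_num]
      rw [show (1 / (-(1/2) + 1) + 1 / (-(1/4) + 1) : ℝ) = 10/3 by norm_num]
      refine mul_le_mul_of_nonneg_left ?_ (by norm_num)
      exact Real.rpow_le_rpow hts.le (by linarith) (by norm_num)
    have hX1 : (0:ℝ) ≤ C₀ * ((10/3) * T ^ ((1:ℝ)/4)) :=
      mul_nonneg hC₀ (mul_nonneg (by norm_num) hT4)
    have hX2 : (0:ℝ) ≤ c * ((8/3) * T ^ ((1:ℝ)/2) * F t) :=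
      mul_nonneg hc (mul_nonneg (mul_nonneg (by norm_num) hT2) (hF0 t htT))
    -- bound for J
    have hJ : (∫⁻ θ in Ioc s t, f θ * k θ) ≤
        ENNReal.ofReal (C₀ * ((10/3) * T ^ ((1:ℝ)/4)) +
          c * ((8/3) * T ^ ((1:ℝ)/2) * F t)) := by
      have hJ1 : (∫⁻ θ in Ioc s t, f θ * k θ) ≤
          ∫⁻ θ in Ioc s t,
            (ENNReal.ofReal C₀ * ENNReal.ofReal ((θ - s) ^ (-(1/2) : ℝ)) * k θ
              + ENNReal.ofReal c * (inr θ * k θ)) := by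
        refine setLIntegral_mono' measurableSet_Ioc fun θ hθ => ?_
        have h := h1 θ hθ.1 (hθ.2.trans htT)
        calc f θ * k θ ≤ (ENNReal.ofReal (C₀ * (θ - s) ^ (-(1/2) : ℝ)) +
              ENNReal.ofReal c * inr θ) * k θ := mul_le_mul_left h _
          _ = _ := by rw [add_mul, ENNReal.ofReal_mul hC₀, mul_assoc (ENNReal.ofReal c)]
      have hg1meas : Measurable fun θ =>
          ENNReal.ofReal C₀ * ENNReal.ofReal ((θ - s) ^ (-(1/2) : ℝ)) * k θ := by
        fun_prop
      rw [lintegral_add_left hg1meas] at hJ1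
      have ht1 : (∫⁻ θ in Ioc s t,
          ENNReal.ofReal C₀ * ENNReal.ofReal ((θ - s) ^ (-(1/2) : ℝ)) * k θ)
          ≤ ENNReal.ofReal (C₀ * ((10/3) * T ^ ((1:ℝ)/4))) := by
        simp_rw [mul_assoc (ENNReal.ofReal C₀)]
        rw [lintegral_const_mul' _ _ ENNReal.ofReal_ne_top]
        rw [ENNReal.ofReal_mul hC₀]
        exact mul_le_mul_right hI1 _
      have ht2 : (∫⁻ θ in Ioc s t, ENNReal.ofReal c * (inr θ * k θ))
          ≤ ENNReal.ofReal (c * ((8/3) * T ^ ((1:ℝ)/2) * F t)) := by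
        rw [lintegral_const_mul' _ _ ENNReal.ofReal_ne_top]
        rw [ENNReal.ofReal_mul hc]
        refine mul_le_mul_right ?_ _
        have hDe2 : (∫⁻ θ in Ioc s t, inr θ * k θ) = D := by
          refine setLIntegral_congr_fun measurableSet_Ioc (fun θ hθ => ?_)
          rw [hinrdef]
          rw [← lintegral_mul_const' _ _ (ENNReal.ofReal_ne_top (r := (t - θ) ^ (-(1/4):ℝ)))]
        rw [hDe2]
        exact hD
      calc (∫⁻ θ in Ioc s t, f θ * k θ) ≤ _ := hJ1
        _ ≤ ENNReal.ofReal (C₀ * ((10/3) * T ^ ((1:ℝ)/4))) +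
            ENNReal.ofReal (c * ((8/3) * T ^ ((1:ℝ)/2) * F t)) := add_le_add ht1 ht2
        _ = _ := by rw [← ENNReal.ofReal_add hX1 hX2]
    -- assemble
    have hfinal : f t ≤ ENNReal.ofReal (C₀ * (t - s) ^ (-(1/2) : ℝ) +
        c * (C₀ * ((10/3) * T ^ ((1:ℝ)/4)) + c * ((8/3) * T ^ ((1:ℝ)/2) * F t))) := by
      refine le_trans (h1 t hst htT) ?_
      rw [ENNReal.ofReal_add (mul_nonneg hC₀ (Real.rpow_nonneg hts.le _))
        (mul_nonneg hc (add_nonneg hX1 hX2)), ENNReal.ofReal_mul hc]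
      exact add_le_add_right (mul_le_mul_right hJ _) _
    have hRnn : (0:ℝ) ≤ C₀ * (t - s) ^ (-(1/2) : ℝ) +
        c * (C₀ * ((10/3) * T ^ ((1:ℝ)/4)) + c * ((8/3) * T ^ ((1:ℝ)/2) * F t)) := by
      exact add_nonneg (mul_nonneg hC₀ (Real.rpow_nonneg hts.le _))
        (mul_nonneg hc (add_nonneg hX1 hX2))
    have hAle := (ENNReal.ofReal_le_ofReal_iff hRnn).mp hfinal
    refine le_trans hAle (le_of_eq ?_)
    simp only [hM1def, hLdef]
    ring
  -- Step 3 : Gronwall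
  have hFB : ∀ x ∈ Icc s T, F x ≤ B := by
    set cl : ℝ → ℝ := fun x => max s (min x T) with hcl
    have hclcont : Continuous cl := continuous_const.max (continuous_id.min continuous_const)
    have hclmem : ∀ x, cl x ∈ Icc s T := fun x =>
      ⟨le_max_left _ _, max_le hsT.le (min_le_right x T)⟩
    have hFprim : ContinuousOn F (Icc s T) := intervalIntegral.continuousOn_primitive hAint
    set Fc : ℝ → ℝ := fun x => F (cl x) with hFcdef
    have hFccont : Continuous Fc := hFprim.comp_continuous hclcont hclmem
    have hFceq : ∀ x ∈ Icc s T, Fc x = F x := by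
      intro x hx
      have : cl x = x := by
        rw [hcl]; simp only [min_eq_left hx.2, max_eq_right hx.1]
      simp only [hFcdef, this]
    have hFc0 : ∀ x, 0 ≤ Fc x := fun x => hF0 (cl x) (hclmem x).2
    set H : ℝ → ℝ := fun u => G0 + L * ∫ x in s..u, Fc x with hHdef
    have hFcint : ∀ a b : ℝ, IntervalIntegrable Fc volume a b := fun a b =>
      hFccont.intervalIntegrable a b
    have hHderiv : ∀ u : ℝ, HasDerivAt H (L * Fc u) u := by
      intro u
      have h := intervalIntegral.integral_hasDerivAt_right (hFcint s u)
        (hFccont.stronglyMeasurableAtFilter volume (nhds u)) hFccont.continuousAt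
      exact (h.const_mul L).const_add G0
    have hHcont : ContinuousOn H (Icc s T) := fun x _ =>
      (hHderiv x).continuousAt.continuousWithinAt
    have hFH : ∀ x ∈ Icc s T, F x ≤ H x := by
      intro x hx
      have hsx : s ≤ x := hx.1
      have hAint' : IntervalIntegrable A volume s x :=
        (intervalIntegrable_iff_integrableOn_Ioc_of_le hsx).mpr
          (hAint.mono_set fun y hy => ⟨hy.1.le, hy.2.trans hx.2⟩)
      have hgint : IntervalIntegrable
          (fun σ => C₀ * (σ - s) ^ (-(1/2) : ℝ) + M1 + L * Fc σ) volume s x :=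
        (((rpow_shift_ii s x _ (by norm_num)).const_mul C₀).add
          intervalIntegrable_const).add ((hFcint s x).const_mul L)
      have hmono : F x ≤ ∫ σ in s..x, (C₀ * (σ - s) ^ (-(1/2) : ℝ) + M1 + L * Fc σ) := by
        rw [show F x = ∫ σ in s..x, A σ from (intervalIntegral.integral_of_le hsx).symm]
        refine intervalIntegral.integral_mono_ae_restrict hsx hAint' hgint ?_
        have hmem : ∀ᵐ σ ∂(volume.restrict (Icc s x)), σ ∈ Ioc s x := by
          rw [← MeasureTheory.restrict_Ioc_eq_restrict_Icc]
          exact ae_restrict_mem measurableSet_Ioc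
        filter_upwards [hmem] with σ hσ
        have hk := hkey σ hσ.1 (hσ.2.trans hx.2)
        rw [hFceq σ ⟨hσ.1.le, hσ.2.trans hx.2⟩]
        exact hk
      have e1 : (∫ σ in s..x, C₀ * (σ - s) ^ (-(1/2) : ℝ))
          = C₀ * ((x - s) ^ ((1:ℝ)/2) * 2) := by
        rw [intervalIntegral.integral_const_mul,
          rpow_shift_eval s x _ (by norm_num : (-1:ℝ) < -(1/2)),
          show (-(1/2) + 1 : ℝ) = (1:ℝ)/2 by norm_num]
        ring
      have e3 : (∫ σ in s..x, L * Fc σ) = L * ∫ σ in s..x, Fc σ :=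
        intervalIntegral.integral_const_mul L Fc
      have heval : (∫ σ in s..x, (C₀ * (σ - s) ^ (-(1/2) : ℝ) + M1 + L * Fc σ))
          = C₀ * ((x - s) ^ ((1:ℝ)/2) * 2) + M1 * (x - s) + L * ∫ σ in s..x, Fc σ := by
        rw [intervalIntegral.integral_add
            (((rpow_shift_ii s x _ (by norm_num)).const_mul C₀).add
              intervalIntegrable_const) ((hFcint s x).const_mul L),
          intervalIntegral.integral_add
            ((rpow_shift_ii s x _ (by norm_num)).const_mul C₀) intervalIntegrable_const,
          e1, e3, intervalIntegral.integral_const, smul_eq_mul]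
        ring
      have hb1 : (x - s) ^ ((1:ℝ)/2) ≤ T ^ ((1:ℝ)/2) :=
        Real.rpow_le_rpow (by linarith) (by linarith [hx.2]) (by norm_num)
      have hb2 : x - s ≤ T := by linarith [hx.2]
      have hG0b : C₀ * ((x - s) ^ ((1:ℝ)/2) * 2) + M1 * (x - s) ≤ G0 := by
        rw [hG0def]
        nlinarith
      calc F x ≤ _ := hmono
        _ = _ := heval
        _ ≤ G0 + L * ∫ σ in s..x, Fc σ := by linarith
        _ = H x := rfl
    have hgron := norm_le_gronwallBound_of_norm_deriv_right_le (f := H)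
      (f' := fun u => L * Fc u) (a := s) (b := T) (δ := G0) (K := L) (ε := 0)
      hHcont (fun x _ => (hHderiv x).hasDerivWithinAt) ?_ ?_
    · intro x hx
      have hH0 : 0 ≤ H x := add_nonneg hG0 (mul_nonneg hL
        (intervalIntegral.integral_nonneg hx.1 fun u _ => hFc0 u))
      have := hgron x hx
      rw [Real.norm_eq_abs, abs_of_nonneg hH0, gronwallBound_ε0] at this
      have hexp : Real.exp (L * (x - s)) ≤ Real.exp (L * T) :=
        Real.exp_le_exp.mpr (mul_le_mul_of_nonneg_left (by linarith [hx.2]) hL)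
      calc F x ≤ H x := hFH x hx
        _ ≤ G0 * Real.exp (L * (x - s)) := this
        _ ≤ G0 * Real.exp (L * T) := mul_le_mul_of_nonneg_left hexp hG0
        _ = B := hBdef.symm
    · rw [show H s = G0 by rw [hHdef]; simp [intervalIntegral.integral_same]]
      rw [Real.norm_eq_abs, abs_of_nonneg hG0]
    · intro x hx
      have hxIcc : x ∈ Icc s T := ⟨hx.1, hx.2.le⟩
      have hH0 : 0 ≤ H x := add_nonneg hG0 (mul_nonneg hL
        (intervalIntegral.integral_nonneg hx.1 fun u _ => hFc0 u))
      rw [Real.norm_eq_abs, Real.norm_eq_abs, abs_of_nonneg (mul_nonneg hL (hFc0 x)),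
        abs_of_nonneg hH0, add_zero]
      refine mul_le_mul_of_nonneg_left ?_ hL
      rw [hFceq x hxIcc]
      exact hFH x hxIcc
  -- Conclusion
  intro t hst htT
  have hAt := hkey t hst htT
  have hFt := hFB t ⟨hst.le, htT⟩
  have hts : 0 < t - s := by linarith
  have hρpos : 0 < (t - s) ^ (-(1/2) : ℝ) := Real.rpow_pos_of_pos hts _
  have h1ρ : 1 ≤ T ^ ((1:ℝ)/2) * (t - s) ^ (-(1/2) : ℝ) := by
    rw [Real.rpow_neg hts.le, ← div_eq_mul_inv,
      le_div_iff₀ (Real.rpow_pos_of_pos hts _), one_mul]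
    exact Real.rpow_le_rpow hts.le (by linarith) (by norm_num)
  have hMLB : 0 ≤ M1 + L * B := by positivity
  calc A t ≤ C₀ * (t - s) ^ (-(1/2) : ℝ) + M1 + L * F t := hAt
    _ ≤ C₀ * (t - s) ^ (-(1/2) : ℝ) + (M1 + L * B) * 1 := by
        have := mul_le_mul_of_nonneg_left hFt hL
        linarith
    _ ≤ C₀ * (t - s) ^ (-(1/2) : ℝ) +
        (M1 + L * B) * (T ^ ((1:ℝ)/2) * (t - s) ^ (-(1/2) : ℝ)) :=
        add_le_add_right (mul_le_mul_of_nonneg_left h1ρ hMLB) _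
    _ ≤ (C₀ + (M1 + L * B) * T ^ ((1:ℝ)/2) + 1) * (t - s) ^ (-(1/2) : ℝ) := by
        nlinarith [hρpos.le]
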